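/- arXiv:1510.07565 — 4 statements merged into one kernel-verified Lean document; each statement's English description precedes it below -/
import Mathlib

section
/- Let G be a weighted directed graph with weights in a unital quantale Σ, let u and v be nodes of G, and let S be a set of nodes of G such that every path from u to v in G contains at least one node of S. Then d(u, v) = ⨆_{x ∈ S} d(u, x) ⊗ d(x, v). -/
/-- A path from `u` to `v` in the directed graph with edge relation `E`:
a nonempty list of nodes starting at `u`, ending at `v`, with consecutive
nodes related by `E`. A single node is a path of length 0. -/
def IsPath {V : Type*} (E : V → V → Prop) (u v : V) (l : List V) : Prop :=
  l ≠ [] ∧ l.head? = some u ∧ l.getLast? = some v ∧ l.Chain' E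

/-- The weight of a path: the ordered product of the weights of its edges,
`1` for a 0-length path. -/
def pathWeight {V M : Type*} [Monoid M] (wt : V → V → M) (l : List V) : M :=
  ((l.zip l.tail).map fun p => wt p.1 p.2).prod

/-- The algebraic distance: supremum of the weights of all paths from `u` to `v`
(the supremum of the empty set being the bottom element). -/
def gdist {V Q : Type*} [CompleteLattice Q] [Monoid Q]
    (E : V → V → Prop) (wt : V → V → Q) (u v : V) : Q :=
  ⨆ l ∈ {l : List V | IsPath E u v l}, pathWeight wt l

lemma pathWeight_cons_cons {V M : Type*} [Monoid M] (wt : V → V → M) (a b : V) (l : List V) :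
    pathWeight wt (a :: b :: l) = wt a b * pathWeight wt (b :: l) := by
  simp [pathWeight]

lemma pathWeight_glue {V M : Type*} [Monoid M] (wt : V → V → M) (x : V) :
    ∀ (l1 : List V) (l2 : List V), l1.getLast? = some x → l2.head? = some x →
    pathWeight wt (l1 ++ l2.tail) = pathWeight wt l1 * pathWeight wt l2
  | [], _, h1, _ => by simp at h1
  | [a], l2, h1, h2 => by
    simp at h1; subst h1
    cases l2 with
    | nil => simp at h2
    | cons b t =>
      simp at h2; subst h2
      simp [pathWeight]
  | a :: b :: rest, l2, h1, h2 => by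
    have h1' : (b :: rest).getLast? = some x := by
      rw [List.getLast?_cons_cons] at h1; exact h1
    have ih := pathWeight_glue wt x (b :: rest) l2 h1' h2
    have e1 : (a :: b :: rest) ++ l2.tail = a :: b :: (rest ++ l2.tail) := rfl
    have e2 : b :: (rest ++ l2.tail) = (b :: rest) ++ l2.tail := rfl
    rw [e1, pathWeight_cons_cons, e2, ih, pathWeight_cons_cons, mul_assoc]

lemma isPath_glue {V : Type*} {E : V → V → Prop} {u x v : V} {l1 l2 : List V}
    (h1 : IsPath E u x l1) (h2 : IsPath E x v l2) : IsPath E u v (l1 ++ l2.tail) := by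
  obtain ⟨hne1, hh1, hl1, hc1⟩ := h1
  obtain ⟨hne2, hh2, hl2, hc2⟩ := h2
  cases l2 with
  | nil => simp at hh2
  | cons b t =>
    simp at hh2; subst hh2
    refine ⟨by simp [hne1], ?_, ?_, ?_⟩
    · rw [List.head?_append]
      cases l1 with
      | nil => exact absurd rfl hne1
      | cons a s => simpa using hh1
    · cases t with
      | nil =>
        simp at hl2 ⊢
        rw [hl1, hl2]
      | cons c s =>
        rw [List.getLast?_cons_cons] at hl2
        rw [List.getLast?_append]
        simp only [List.tail_cons]
        rw [hl2]
        rfl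
    · unfold List.Chain' at hc1 hc2 ⊢
      rw [List.isChain_append]
      refine ⟨hc1, hc2.tail, ?_⟩
      intro p hp q hq
      rw [hl1] at hp
      simp at hp; subst hp
      cases t with
      | nil => simp at hq
      | cons c s =>
        simp at hq; subst hq
        exact (List.isChain_cons_cons.mp hc2).1

lemma isPath_split {V Q : Type*} [Monoid Q] {E : V → V → Prop} (wt : V → V → Q)
    {u v x : V} {l : List V} (h : IsPath E u v l) (hx : x ∈ l) :
    ∃ l1 l2, IsPath E u x l1 ∧ IsPath E x v l2 ∧
      pathWeight wt l = pathWeight wt l1 * pathWeight wt l2 := by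
  obtain ⟨p, q, rfl⟩ := List.append_of_mem hx
  obtain ⟨hne, hh, hl, hc⟩ := h
  refine ⟨p ++ [x], x :: q, ⟨by simp, ?_, List.getLast?_concat, ?_⟩, ⟨by simp, rfl, ?_, ?_⟩, ?_⟩
  · rw [show p ++ x :: q = (p ++ [x]) ++ q by simp] at hh
    rw [List.head?_append] at hh
    cases hp : (p ++ [x]).head? with
    | none => simp [hp] at hh; exact absurd hp (by simp [List.head?_eq_none_iff])
    | some a => rw [hp] at hh; simpa using hh
  · unfold List.Chain' at hc
    rw [show p ++ x :: q = (p ++ [x]) ++ q by simp, List.isChain_append] at hc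
    exact hc.1
  · rw [List.getLast?_append] at hl
    cases hq : (x :: q).getLast? with
    | none => rw [List.getLast?_eq_none_iff] at hq; simp at hq
    | some a => rw [hq] at hl; simpa [hq] using hl
  · unfold List.Chain' at hc
    rw [List.isChain_append] at hc
    exact hc.2.1
  · have := pathWeight_glue wt x (p ++ [x]) (x :: q) (List.getLast?_concat) rfl
    simpa using this

lemma mul_le_mul_quantale {Q : Type*} [CompleteLattice Q] [Monoid Q]
    (hdl : ∀ (a : Q) (S : Set Q), a * sSup S = ⨆ s ∈ S, a * s)
    (hdr : ∀ (a : Q) (S : Set Q), sSup S * a = ⨆ s ∈ S, s * a)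
    {a b c d : Q} (h1 : a ≤ b) (h2 : c ≤ d) : a * c ≤ b * d := by
  have hab : a * c ≤ b * c := by
    have : sSup {a, b} * c = ⨆ s ∈ ({a, b} : Set Q), s * c := hdr c {a, b}
    rw [sSup_pair, sup_eq_right.mpr h1] at this
    rw [this]
    exact le_iSup₂ (f := fun s (_ : s ∈ ({a, b} : Set Q)) => s * c) a (by simp)
  have hcd : b * c ≤ b * d := by
    have : b * sSup {c, d} = ⨆ s ∈ ({c, d} : Set Q), b * s := hdl b {c, d}
    rw [sSup_pair, sup_eq_right.mpr h2] at this
    rw [this]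
    exact le_iSup₂ (f := fun s (_ : s ∈ ({c, d} : Set Q)) => b * s) c (by simp)
  exact hab.trans hcd

/-- Let G be a weighted directed graph with weights in a unital quantale Σ,
let u and v be nodes of G, and let S be a set of nodes of G such that every path from u
to v in G contains at least one node of S. Then d(u, v) = ⨆_{x ∈ S} d(u, x) ⊗ d(x, v). -/
theorem stmt_3 {V Q : Type*} [CompleteLattice Q] [Monoid Q]
    (hdl : ∀ (a : Q) (S : Set Q), a * sSup S = ⨆ s ∈ S, a * s)
    (hdr : ∀ (a : Q) (S : Set Q), sSup S * a = ⨆ s ∈ S, s * a)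
    (E : V → V → Prop) (wt : V → V → Q) (u v : V) (S : Set V)
    (hS : ∀ l : List V, IsPath E u v l → ∃ x ∈ l, x ∈ S) :
    gdist E wt u v = ⨆ x ∈ S, gdist E wt u x * gdist E wt x v := by
  apply le_antisymm
  · rw [gdist]
    apply iSup₂_le
    intro l hl
    obtain ⟨x, hxl, hxS⟩ := hS l hl
    obtain ⟨l1, l2, h1, h2, hw⟩ := isPath_split wt hl hxl
    calc pathWeight wt l = pathWeight wt l1 * pathWeight wt l2 := hw
      _ ≤ gdist E wt u x * gdist E wt x v :=
        mul_le_mul_quantale hdl hdr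
          (le_iSup₂ (f := fun l (_ : l ∈ {l : List V | IsPath E u x l}) => pathWeight wt l) l1 h1)
          (le_iSup₂ (f := fun l (_ : l ∈ {l : List V | IsPath E x v l}) => pathWeight wt l) l2 h2)
      _ ≤ ⨆ x ∈ S, gdist E wt u x * gdist E wt x v :=
        le_iSup₂ (f := fun x (_ : x ∈ S) => gdist E wt u x * gdist E wt x v) x hxS
  · apply iSup₂_le
    intro x hx
    have hux : gdist E wt u x = sSup (pathWeight wt '' {l : List V | IsPath E u x l}) := by
      rw [sSup_image]; rfl
    have hxv : gdist E wt x v = sSup (pathWeight wt '' {l : List V | IsPath E x v l}) := by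
      rw [sSup_image]; rfl
    rw [hux, hdr]
    apply iSup₂_le
    rintro w ⟨l1, hl1, rfl⟩
    rw [hxv, hdl]
    apply iSup₂_le
    rintro w ⟨l2, hl2, rfl⟩
    have hpath := isPath_glue hl1 hl2
    have hw := pathWeight_glue wt x l1 l2 hl1.2.2.1 hl2.2.1
    rw [← hw, gdist]
    exact le_iSup₂ (f := fun l (_ : l ∈ {l : List V | IsPath E u v l}) => pathWeight wt l)
      (l1 ++ l2.tail) hpath
end

section
/- Let p ≥ 0, a > 0 and 0 < q < 1 be real numbers with a·q^p < 1, and let M ≥ 0. If f : [0, ∞) → [0, ∞) satisfies f(x) ≤ M for all 0 ≤ x ≤ 1 and f(x) ≤ x^p + a·f(q·x) for all x ≥ 1, then there exists a constant C such that f(x) ≤ C·x^p for all x ≥ 1. -/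
/-- Let p ≥ 0, a > 0 and 0 < q < 1 be real numbers with a·q^p < 1,
and let M ≥ 0. If f : [0, ∞) → [0, ∞) satisfies f(x) ≤ M for all 0 ≤ x ≤ 1 and
f(x) ≤ x^p + a·f(q·x) for all x ≥ 1, then there exists a constant C such that
f(x) ≤ C·x^p for all x ≥ 1. -/
theorem stmt_9 (p a q M : ℝ) (hp : 0 ≤ p) (ha : 0 < a) (hq0 : 0 < q) (hq1 : q < 1)
    (hqa : a * q ^ p < 1) (hM : 0 ≤ M)
    (f : ℝ → ℝ) (hfnn : ∀ x, 0 ≤ x → 0 ≤ f x)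
    (hf1 : ∀ x, 0 ≤ x → x ≤ 1 → f x ≤ M)
    (hrec : ∀ x, 1 ≤ x → f x ≤ x ^ p + a * f (q * x)) :
    ∃ C : ℝ, ∀ x, 1 ≤ x → f x ≤ C * x ^ p := by
  set r : ℝ := a * q ^ p with hr
  have hqp : (0:ℝ) < q ^ p := Real.rpow_pos_of_pos hq0 p
  have hr0 : 0 ≤ r := le_of_lt (mul_pos ha hqp)
  have hr1 : r < 1 := hqa
  have h1r : (0:ℝ) < 1 - r := by linarith
  set C : ℝ := 1 / (1 - r) + a * M with hC
  have haM : 0 ≤ a * M := mul_nonneg ha.le hM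
  have hC1 : (1:ℝ) + a * M ≤ C := by
    have : (1:ℝ) ≤ 1 / (1 - r) := by
      rw [le_div_iff₀ h1r]; linarith
    rw [hC]; linarith
  refine ⟨C, ?_⟩
  have key : ∀ n : ℕ, ∀ x : ℝ, 1 ≤ x → x ≤ (1/q) ^ n → f x ≤ C * x ^ p := by
    intro n
    induction n with
    | zero =>
      intro x hx hxn
      simp at hxn
      have hx1 : x = 1 := le_antisymm hxn hx
      subst hx1
      have hq : f (q * 1) ≤ M := by
        apply hf1 _ (by positivity); rw [mul_one]; linarith
      have := hrec 1 le_rfl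
      rw [Real.one_rpow] at this ⊢
      have : f 1 ≤ 1 + a * M := by nlinarith
      linarith [hC1]
    | succ n ih =>
      intro x hx hxn
      have hx0 : (0:ℝ) < x := by linarith
      have hxp1 : (1:ℝ) ≤ x ^ p := Real.one_le_rpow hx hp
      have hfx := hrec x hx
      by_cases hqx : 1 ≤ q * x
      · have hqxn : q * x ≤ (1/q) ^ n := by
          have : (1/q) ^ (n+1) = (1/q) * (1/q)^n := pow_succ' _ _
          calc q * x ≤ q * (1/q)^(n+1) := by
                apply mul_le_mul_of_nonneg_left hxn (le_of_lt hq0)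
            _ = (1/q)^n := by
                rw [this]; field_simp
        have hih := ih (q * x) hqx hqxn
        have hmul : (q * x) ^ p = q ^ p * x ^ p :=
          Real.mul_rpow (le_of_lt hq0) (le_of_lt hx0)
        rw [hmul] at hih
        have hCr : 1 + r * C ≤ C := by
          have h1 : 1 + r * (1 / (1-r)) = 1 / (1-r) := by field_simp; ring
          have h2 : r * (a * M) ≤ a * M := by nlinarith [mul_nonneg h1r.le haM]
          rw [hC]; nlinarith
        calc f x ≤ x ^ p + a * (C * (q ^ p * x ^ p)) := by nlinarith
          _ = (1 + r * C) * x ^ p := by rw [hr]; ring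
          _ ≤ C * x ^ p := by nlinarith
      · push_neg at hqx
        have hfq : f (q * x) ≤ M :=
          hf1 _ (by positivity) (le_of_lt hqx)
        calc f x ≤ x ^ p + a * M := by nlinarith
          _ ≤ (1 + a * M) * x ^ p := by nlinarith [mul_nonneg haM (sub_nonneg.2 hxp1)]
          _ ≤ C * x ^ p := by nlinarith
  intro x hx
  obtain ⟨n, hn⟩ := pow_unbounded_of_one_lt x (one_lt_one_div hq0 hq1)
  exact key n x hx (le_of_lt hn)
end

section
/- Fix a real ε with 0 < ε ≤ 1, a natural number λ with λ ≥ 4/ε, a real δ with 0 < δ ≤ ε/18, and an integer k ≥ 2, and set q = ((1+δ)/2)^(λ−1). If f : [0, ∞) → [0, ∞) is bounded on [0, 1] and satisfies f(x) ≤ x^(3·(k−1)) + 2^(λ·k) · f(q·x) for all x ≥ 1, then there exists a constant C such that f(x) ≤ C · x^(3·(k−1)) for all x ≥ 1. -/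
lemma aux_num (u v L D : ℝ) (hu1 : 1 ≤ u) (hv3 : 3 ≤ v)
    (hD18 : D ≤ 1/18) (hL : (0.6931471803 : ℝ) < L) :
    (v+1)*(u+1)*L + 3*u*(v*(D-L)) < 0 := by
  have huv0 : (0:ℝ) < u*v := by positivity
  have e2 : u*v/3 ≤ 2*u*v - u - v - 1 := by nlinarith
  have e1 : 3*(u*v)*D ≤ u*v/6 := by nlinarith
  have e3 : (0.6931471803:ℝ)*(2*u*v - u - v - 1) ≤ L*(2*u*v - u - v - 1) := by
    apply mul_le_mul_of_nonneg_right (le_of_lt hL); linarith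
  nlinarith

/-- Fix a real ε with 0 < ε ≤ 1, a natural number λ with λ ≥ 4/ε,
a real δ with 0 < δ ≤ ε/18, and an integer k ≥ 2, and set q = ((1+δ)/2)^(λ−1).
If f : [0, ∞) → [0, ∞) is bounded on [0, 1] and satisfies
f(x) ≤ x^(3·(k−1)) + 2^(λ·k) · f(q·x) for all x ≥ 1,
then there exists a constant C such that f(x) ≤ C · x^(3·(k−1)) for all x ≥ 1. -/
theorem stmt_10 (ε : ℝ) (hε0 : 0 < ε) (hε1 : ε ≤ 1)
    (lam : ℕ) (hlam : (4 : ℝ) / ε ≤ (lam : ℝ))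
    (δ : ℝ) (hδ0 : 0 < δ) (hδ : δ ≤ ε / 18)
    (k : ℕ) (hk : 2 ≤ k)
    (q : ℝ) (hq : q = ((1 + δ) / 2) ^ (lam - 1))
    (f : ℝ → ℝ) (hfnn : ∀ x, 0 ≤ x → 0 ≤ f x)
    (hbdd : ∃ M : ℝ, ∀ x, 0 ≤ x → x ≤ 1 → f x ≤ M)
    (hrec : ∀ x, 1 ≤ x → f x ≤ x ^ (3 * ((k : ℝ) - 1)) + (2 : ℝ) ^ (lam * k) * f (q * x)) :
    ∃ C : ℝ, ∀ x, 1 ≤ x → f x ≤ C * x ^ (3 * ((k : ℝ) - 1)) := by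
  obtain ⟨M, hM⟩ := hbdd
  have hε4 : (4:ℝ) ≤ lam := le_trans (by rw [le_div_iff₀ hε0]; nlinarith) hlam
  have hlam4 : 4 ≤ lam := by exact_mod_cast hε4
  have hδ18 : δ ≤ 1/18 := by linarith
  set b : ℝ := (1 + δ) / 2 with hb
  have hb0 : 0 < b := by positivity
  have hb1 : b < 1 := by rw [hb]; linarith
  have hq0 : 0 < q := by rw [hq]; positivity
  have hq1 : q < 1 := by
    rw [hq]; exact pow_lt_one₀ hb0.le hb1 (by omega)
  set a : ℝ := 3 * ((k:ℝ) - 1) with ha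
  have hk2 : (2:ℝ) ≤ (k:ℝ) := by exact_mod_cast hk
  have ha3 : (3:ℝ) ≤ a := by rw [ha]; linarith
  have ha0 : 0 < a := by linarith
  set N : ℕ := lam * k with hN
  have h2N : (1:ℝ) ≤ 2 ^ N := one_le_pow₀ (by norm_num)
  set r : ℝ := 2 ^ N * q ^ a with hr
  have hr0 : 0 < r := by positivity
  -- key: r < 1
  have hr1 : r < 1 := by
    have hlog : Real.log r < 0 := by
      have hlq : Real.log q = ((lam - 1 : ℕ) : ℝ) * Real.log b := by
        rw [hq, Real.log_pow]
      have hlb : Real.log b = Real.log (1 + δ) - Real.log 2 := by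
        rw [hb, Real.log_div (by linarith) (by norm_num)]
      have h1 : Real.log r = (N:ℝ) * Real.log 2 + a * (((lam - 1 : ℕ):ℝ) * Real.log b) := by
        rw [hr, Real.log_mul (by positivity) (by positivity), Real.log_pow,
          Real.log_rpow hq0, hlq]
      have hcast : ((lam - 1 : ℕ) : ℝ) = (lam : ℝ) - 1 := by
        rw [Nat.cast_sub (by omega)]; norm_num
      have hNcast : ((N:ℕ):ℝ) = (lam:ℝ) * (k:ℝ) := by rw [hN]; push_cast; ring
      have hD : Real.log (1 + δ) ≤ δ := by
        have := Real.log_le_sub_one_of_pos (show (0:ℝ) < 1 + δ by linarith)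
        linarith
      have hL : (0.6931471803 : ℝ) < Real.log 2 := Real.log_two_gt_d9
      rw [h1, hcast, hNcast, hlb]
      set u : ℝ := (k:ℝ) - 1 with hu
      set v : ℝ := (lam:ℝ) - 1 with hv
      have hu1 : 1 ≤ u := by rw [hu]; linarith
      have hv3 : 3 ≤ v := by rw [hv]; linarith
      have hD18 : Real.log (1 + δ) ≤ 1/18 := by linarith
      have hak : a = 3 * u := by rw [ha, hu]
      have hlk : (lam:ℝ) * (k:ℝ) = (v+1)*(u+1) := by rw [hu, hv]; ring
      rw [hak, hlk]
      exact aux_num u v (Real.log 2) (Real.log (1+δ)) hu1 hv3 hD18 hL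
    exact (Real.log_neg_iff hr0).mp hlog
  set M' : ℝ := max M 0 with hM'
  have hM'0 : 0 ≤ M' := le_max_right _ _
  have hMM' : M ≤ M' := le_max_left _ _
  set C : ℝ := max (1/(1-r)) (1 + 2^N * M') with hC
  have h1r : 0 < 1 - r := by linarith
  have hC2 : 1 + 2^N * M' ≤ C := le_max_right _ _
  have hC0 : 1 ≤ C := le_trans (by nlinarith) hC2
  have hC1 : 1 + C * r ≤ C := by
    have h := mul_le_mul_of_nonneg_right (le_max_left (1/(1-r)) (1 + 2^N * M')) h1r.le
    rw [div_mul_cancel₀ 1 (ne_of_gt h1r)] at h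
    nlinarith
  -- main induction
  have key : ∀ n : ℕ, ∀ x : ℝ, 1 ≤ x → q ^ n * x ≤ 1 → f x ≤ C * x ^ a := by
    intro n
    induction n with
    | zero =>
      intro x hx1 hxq
      have hx : x = 1 := le_antisymm (by simpa using hxq) hx1
      subst hx
      rw [Real.one_rpow, mul_one]
      have := hM 1 (by norm_num) (by norm_num)
      nlinarith
    | succ n ih =>
      intro x hx1 hxq
      have hxa1 : (1:ℝ) ≤ x ^ a := by
        calc (1:ℝ) = x ^ (0:ℝ) := (Real.rpow_zero x).symm
        _ ≤ x ^ a := Real.rpow_le_rpow_of_exponent_le hx1 ha0.le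
      have hxa0 : (0:ℝ) ≤ x ^ a := by linarith
      have h := hrec x hx1
      rcases le_or_gt 1 (q * x) with hqx | hqx
      · have hf : f (q * x) ≤ C * (q * x) ^ a := by
          apply ih (q * x) hqx
          calc q ^ n * (q * x) = q ^ (n+1) * x := by ring
          _ ≤ 1 := hxq
        have hmul : (q * x) ^ a = q ^ a * x ^ a :=
          Real.mul_rpow hq0.le (by linarith)
        rw [hmul] at hf
        have h2 : f x ≤ x ^ a + 2^N * (C * (q ^ a * x ^ a)) := by
          refine le_trans h ?_
          have := mul_le_mul_of_nonneg_left hf (show (0:ℝ) ≤ (2:ℝ)^N by positivity)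
          linarith
        have h3 : x ^ a + 2^N * (C * (q ^ a * x ^ a)) = (1 + C * r) * x ^ a := by
          rw [hr]; ring
        rw [h3] at h2
        calc f x ≤ (1 + C * r) * x ^ a := h2
        _ ≤ C * x ^ a := mul_le_mul_of_nonneg_right hC1 hxa0
      · have hf : f (q * x) ≤ M' := by
          refine le_trans (hM (q * x) (by positivity) hqx.le) hMM'
        have h2 : f x ≤ x ^ a + 2^N * M' := by
          refine le_trans h ?_
          have := mul_le_mul_of_nonneg_left hf (show (0:ℝ) ≤ (2:ℝ)^N by positivity)
          linarith
        have h3 : x ^ a + 2^N * M' ≤ (1 + 2^N * M') * x ^ a := by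
          have ht0 : (0:ℝ) ≤ 2^N * M' := by positivity
          have ht := mul_le_mul_of_nonneg_left hxa1 ht0
          rw [mul_one] at ht
          have e : (1 + 2^N * M') * x ^ a = x ^ a + 2^N * M' * x ^ a := by ring
          rw [e]
          linarith
        calc f x ≤ (1 + 2^N * M') * x ^ a := le_trans h2 h3
        _ ≤ C * x ^ a := mul_le_mul_of_nonneg_right hC2 hxa0
  refine ⟨C, fun x hx1 => ?_⟩
  obtain ⟨n, hn⟩ := exists_pow_lt_of_lt_one (show (0:ℝ) < 1/x by positivity) hq1
  apply key n x hx1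
  have hx0 : (0:ℝ) < x := by linarith
  calc q ^ n * x ≤ (1/x) * x := by
        apply mul_le_mul_of_nonneg_right hn.le hx0.le
  _ = 1 := by field_simp
end

section
/- Fix a real ε with 0 < ε ≤ 1, a natural number λ with λ ≥ 4/ε, and a real δ with 0 < δ ≤ ε/18, and set q = ((1+δ)/2)^(λ−1). If f : [0, ∞) → [0, ∞) is bounded on [0, 1] and satisfies f(x) ≤ x^(2+ε) + 2^(2·λ) · f(q·x) for all x ≥ 1, then there exists a constant C such that f(x) ≤ C · x^(2+ε) for all x ≥ 1. -/
/-- Fix a real ε with 0 < ε ≤ 1, a natural number λ with λ ≥ 4/ε,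
and a real δ with 0 < δ ≤ ε/18, and set q = ((1+δ)/2)^(λ−1).
If f : [0, ∞) → [0, ∞) is bounded on [0, 1] and satisfies
f(x) ≤ x^(2+ε) + 2^(2·λ) · f(q·x) for all x ≥ 1,
then there exists a constant C such that f(x) ≤ C · x^(2+ε) for all x ≥ 1. -/
theorem stmt_11 (ε : ℝ) (hε0 : 0 < ε) (hε1 : ε ≤ 1)
    (lam : ℕ) (hlam : (4 : ℝ) / ε ≤ (lam : ℝ))
    (δ : ℝ) (hδ0 : 0 < δ) (hδ : δ ≤ ε / 18)
    (q : ℝ) (hq : q = ((1 + δ) / 2) ^ (lam - 1))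
    (f : ℝ → ℝ) (hfnn : ∀ x, 0 ≤ x → 0 ≤ f x)
    (hbdd : ∃ M : ℝ, ∀ x, 0 ≤ x → x ≤ 1 → f x ≤ M)
    (hrec : ∀ x, 1 ≤ x → f x ≤ x ^ (2 + ε) + (2 : ℝ) ^ (2 * lam) * f (q * x)) :
    ∃ C : ℝ, ∀ x, 1 ≤ x → f x ≤ C * x ^ (2 + ε) := by
  obtain ⟨M, hM⟩ := hbdd
  have hε' : (0:ℝ) < 2 + ε := by linarith
  have hδ1 : δ < 1 := by linarith
  have hr0 : (0:ℝ) < (1 + δ)/2 := by linarith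
  have hr1 : (1 + δ)/2 < 1 := by linarith
  have hεlam : (4:ℝ) ≤ ε * lam := by
    rw [div_le_iff₀ hε0] at hlam; linarith [mul_comm ε (lam:ℝ)]
  have hlam4 : 4 ≤ lam := by
    have h4 : (4:ℝ) ≤ (lam:ℝ) := by nlinarith
    exact_mod_cast h4
  have hm : ((lam - 1 : ℕ) : ℝ) = (lam : ℝ) - 1 := by
    have h1 : 1 ≤ lam := by omega
    push_cast [h1]; ring
  have hq0 : 0 < q := hq ▸ pow_pos hr0 _
  have hq1 : q < 1 := hq ▸ pow_lt_one₀ hr0.le hr1 (by omega)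
  set A : ℝ := (2:ℝ)^(2*lam) with hA
  have hA0 : 0 < A := pow_pos two_pos _
  set k : ℝ := A * q ^ (2+ε) with hk
  have hk0 : 0 < k := mul_pos hA0 (Real.rpow_pos_of_pos hq0 _)
  have hklt : k < 1 := by
    have hlogq : Real.log q = ((lam:ℝ) - 1) * (Real.log (1+δ) - Real.log 2) := by
      rw [hq, Real.log_pow, hm, Real.log_div (by linarith) two_ne_zero]
    have hlogA : Real.log A = (2*(lam:ℝ)) * Real.log 2 := by
      rw [hA, Real.log_pow]; push_cast; ring
    have hlog1δ : Real.log (1+δ) ≤ δ := by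
      have := Real.log_le_sub_one_of_pos (by linarith : (0:ℝ) < 1+δ); linarith
    have hlog1δ0 : 0 ≤ Real.log (1+δ) := Real.log_nonneg (by linarith)
    have hlog2 : (0.6931471803:ℝ) < Real.log 2 := Real.log_two_gt_d9
    have hlogk : Real.log k < 0 := by
      rw [hk, Real.log_mul (ne_of_gt hA0) (ne_of_gt (Real.rpow_pos_of_pos hq0 _)),
        Real.log_rpow hq0, hlogA, hlogq]
      have hlamr : (4:ℝ) ≤ (lam:ℝ) := by exact_mod_cast hlam4
      nlinarith [mul_nonneg (mul_nonneg (by linarith : (0:ℝ) ≤ 2+ε) (by linarith : (0:ℝ) ≤ (lam:ℝ)-1)) hlog1δ0,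
        mul_le_mul_of_nonneg_left hlog1δ (by nlinarith : (0:ℝ) ≤ (2+ε)*((lam:ℝ)-1)),
        mul_le_mul_of_nonneg_left (le_of_lt hlog2) (by nlinarith : (0:ℝ) ≤ ε*(lam:ℝ) - 2 - ε),
        mul_pos (by linarith : (0:ℝ) < ε*(lam:ℝ) - 3) (by linarith : (0:ℝ) < Real.log 2 - 1/6)]
    calc k = Real.exp (Real.log k) := (Real.exp_log hk0).symm
      _ < Real.exp 0 := Real.exp_lt_exp.mpr hlogk
      _ = 1 := Real.exp_zero
  have hMM : ∀ y : ℝ, 0 ≤ y → y ≤ 1 → f y ≤ max M 1 :=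
    fun y h0 h1 => le_trans (hM y h0 h1) (le_max_left _ _)
  have hM1 : (1:ℝ) ≤ max M 1 := le_max_right _ _
  set C : ℝ := (1 + A * max M 1) / (1 - k) with hC
  have h1k : 0 < 1 - k := by linarith
  have hCeq : C * (1 - k) = 1 + A * max M 1 := div_mul_cancel₀ _ (ne_of_gt h1k)
  have hAM : (0:ℝ) ≤ A * max M 1 := mul_nonneg hA0.le (by linarith)
  have hCeq' : C - k * C = 1 + A * max M 1 := by linear_combination hCeq
  have hC0 : 0 < C := div_pos (by linarith) h1k
  have hCge : 1 + A * max M 1 ≤ C := by linarith [mul_pos hk0 hC0]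
  have hCk : 1 + k * C ≤ C := by linarith
  have hxp : ∀ x : ℝ, 1 ≤ x → (1:ℝ) ≤ x ^ (2+ε) := by
    intro x hx
    calc (1:ℝ) = (1:ℝ) ^ (2+ε) := (Real.one_rpow _).symm
      _ ≤ x ^ (2+ε) := Real.rpow_le_rpow zero_le_one hx hε'.le
  have base : ∀ x : ℝ, 1 ≤ x → q * x ≤ 1 → f x ≤ C * x ^ (2+ε) := by
    intro x hx1 hqx
    have hx2 := hxp x hx1
    have hfq : f (q*x) ≤ max M 1 := hMM _ (by positivity) hqx
    have h := hrec x hx1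
    calc f x ≤ x^(2+ε) + A * f (q*x) := h
      _ ≤ x^(2+ε) + A * max M 1 := add_le_add_right (mul_le_mul_of_nonneg_left hfq hA0.le) _
      _ ≤ (1 + A * max M 1) * x^(2+ε) := by
          rw [add_mul, one_mul]
          exact add_le_add_right (le_mul_of_one_le_right hAM hx2) _
      _ ≤ C * x^(2+ε) := mul_le_mul_of_nonneg_right hCge (le_trans zero_le_one hx2)
  have key : ∀ n : ℕ, ∀ x : ℝ, 1 ≤ x → q^n * x ≤ 1 → f x ≤ C * x ^ (2+ε) := by
    intro n
    induction n with
    | zero =>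
      intro x hx1 hx2
      rw [pow_zero, one_mul] at hx2
      exact base x hx1 (mul_le_one₀ hq1.le (by linarith) hx2)
    | succ n ih =>
      intro x hx1 hx2
      by_cases hqx : q * x ≤ 1
      · exact base x hx1 hqx
      · push_neg at hqx
        have hqn : q^n * (q*x) ≤ 1 := by
          rw [pow_succ, mul_assoc] at hx2; exact hx2
        have hfq := ih (q*x) hqx.le hqn
        have hx2' := hxp x hx1
        have hmul : (q*x)^(2+ε) = q^(2+ε) * x^(2+ε) :=
          Real.mul_rpow hq0.le (by linarith)
        have h := hrec x hx1
        calc f x ≤ x^(2+ε) + A * f (q*x) := h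
          _ ≤ x^(2+ε) + A * (C * (q*x)^(2+ε)) := add_le_add_right (mul_le_mul_of_nonneg_left hfq hA0.le) _
          _ = (1 + k * C) * x^(2+ε) := by rw [hmul, hk]; ring
          _ ≤ C * x^(2+ε) := mul_le_mul_of_nonneg_right hCk (le_trans zero_le_one hx2')
  refine ⟨C, fun x hx => ?_⟩
  obtain ⟨n, hn⟩ := exists_pow_lt_of_lt_one (by positivity : (0:ℝ) < 1/x) hq1
  have : q^n * x ≤ 1 := by
    have hx0 : (0:ℝ) < x := by linarith
    have := mul_lt_mul_of_pos_right hn hx0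
    rw [one_div, inv_mul_cancel₀ (ne_of_gt hx0)] at this
    linarith
  exact key n x hx this
end
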